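/- Let C be a monoidal category and (P, ε) a pair with P an object and ε : P → 𝟙 a morphism such that ε ⊗ id_P : P ⊗ P → P and id_P ⊗ ε : P ⊗ P → P are both isomorphisms. Then (ε ⊗ id_P) = (id_P ⊗ ε) as morphisms P ⊗ P → P (modulo unitor/associator coherence), i.e. the two induced isomorphisms P ⊗ P ≅ P coincide. -/

import Mathlib

open CategoryTheory MonoidalCategory

/-- Let `C` be a monoidal category and `(P, ε)` a counital
idempotent: `ε : P ⟶ 𝟙` with both `ε ▷ P` and `P ◁ ε` invertible.  Then the two
induced isomorphisms `P ⊗ P ≅ P` coincide (modulo the unitors):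
`(ε ▷ P) ≫ λ_P = (P ◁ ε) ≫ ρ_P`. -/
theorem stmt16 {C : Type*} [Category C] [MonoidalCategory C]
    (P : C) (ε : P ⟶ 𝟙_ C)
    (h1 : IsIso (ε ▷ P)) (h2 : IsIso (P ◁ ε)) :
    (ε ▷ P) ≫ (λ_ P).hom = (P ◁ ε) ≫ (ρ_ P).hom := by
  set u : P ⊗ P ⟶ P := (ε ▷ P) ≫ (λ_ P).hom with hu
  set v : P ⊗ P ⟶ P := (P ◁ ε) ≫ (ρ_ P).hom with hv
  have hiu : IsIso u := by rw [hu]; infer_instance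
  have hiv : IsIso v := by rw [hv]; infer_instance
  -- naturality of `U_X = ε ▷ X ≫ λ_X` : for f : X ⟶ Y, P ◁ f ≫ U_Y = U_X ≫ f
  have Unat : ∀ {X Y : C} (f : X ⟶ Y),
      (P ◁ f) ≫ (ε ▷ Y) ≫ (λ_ Y).hom = ((ε ▷ X) ≫ (λ_ X).hom) ≫ f := by
    intro X Y f
    rw [whisker_exchange_assoc, leftUnitor_naturality, Category.assoc]
  -- naturality of `V_X = X ◁ ε ≫ ρ_X`
  have Vnat : ∀ {X Y : C} (f : X ⟶ Y),
      (f ▷ P) ≫ (Y ◁ ε) ≫ (ρ_ Y).hom = ((X ◁ ε) ≫ (ρ_ X).hom) ≫ f := by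
    intro X Y f
    rw [← whisker_exchange_assoc, rightUnitor_naturality, Category.assoc]
  -- key1 : P ◁ u = (α_ P P P).inv ≫ (u ▷ P)
  have hU : (ε ▷ (P ⊗ P)) ≫ (λ_ (P ⊗ P)).hom = (α_ P P P).inv ≫ (u ▷ P) := by
    rw [hu, comp_whiskerRight, leftUnitor_tensor_hom, ← Category.assoc, ← Category.assoc,
      ← associator_inv_naturality_left]
  have key1 : P ◁ u = (α_ P P P).inv ≫ (u ▷ P) := by
    have := Unat u
    rw [← hu] at this
    rw [← cancel_mono u, this, hU]
  -- key2 : P ◁ u = (α_ P P P).inv ≫ (v ▷ P)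
  have key2 : P ◁ u = (α_ P P P).inv ≫ (v ▷ P) := by
    rw [hu, hv, MonoidalCategory.whiskerLeft_comp, comp_whiskerRight,
      whisker_assoc_symm]
    simp
  have hvu : u ▷ P = v ▷ P := by
    rw [← cancel_epi (α_ P P P).inv, ← key1, ← key2]
  -- V on P ⊗ P is iso
  have hV : IsIso (((P ⊗ P) ◁ ε) ≫ (ρ_ (P ⊗ P)).hom) := by
    have : (P ⊗ P) ◁ ε = (α_ P P P).hom ≫ (P ◁ (P ◁ ε)) ≫ (α_ P P (𝟙_ C)).inv := by
      simp
    rw [this]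
    infer_instance
  have e1 := Vnat u
  have e2 := Vnat v
  rw [← hv] at e1 e2
  rw [hvu] at e1
  rw [← cancel_epi (((P ⊗ P) ◁ ε) ≫ (ρ_ (P ⊗ P)).hom), ← e1, e2]
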